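/- Let a group G act on the open interval (0,1) by orientation-preserving homeomorphisms such that the action is free (no nontrivial element has a fixed point). Then G is abelian (isomorphic to a subgroup of (ℝ,+)). Consequently, a free group of rank 2 acting faithfully on (0,1) by homeomorphisms must contain a nontrivial element with a fixed point in (0,1). -/

import Mathlib

open Set Filter Topology

namespace HolderPf

abbrev II : Set ℝ := Set.Ioo (0:ℝ) 1
noncomputable def pt : II := ⟨1/2, by norm_num, by norm_num⟩

variable {G : Type} [Group G]

structure Setup (G : Type) [Group G] where
  φ : G →* Equiv.Perm ↥II
  hm : ∀ g : G, StrictMono (φ g)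
  hfree : ∀ g : G, g ≠ 1 → ∀ x, φ g x ≠ x

namespace Setup

variable (S : Setup G)

noncomputable def val (g : G) : ℝ := (S.φ g pt : ℝ)

lemma act_mul (g h : G) (x : II) : S.φ (g*h) x = S.φ g (S.φ h x) := by
  rw [map_mul]; rfl

lemma act_one (x : II) : S.φ 1 x = x := by rw [map_one]; rfl

lemma act_inv (g : G) (x : II) : S.φ g⁻¹ (S.φ g x) = x := by
  rw [← S.act_mul, inv_mul_cancel, S.act_one]

lemma act_inv' (g : G) (x : II) : S.φ g (S.φ g⁻¹ x) = x := by
  conv_lhs => rw [show S.φ g (S.φ g⁻¹ x) = S.φ g⁻¹⁻¹ (S.φ g⁻¹ x) by rw [inv_inv]]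
  exact S.act_inv g⁻¹ x

noncomputable def eio (g : G) : II ≃o II :=
  { toEquiv := S.φ g, map_rel_iff' := fun {a b} => (S.hm g).le_iff_le }

lemma eio_apply (g : G) (x : II) : S.eio g x = S.φ g x := rfl

end Setup

lemma fix_of_updown (E : II ≃o II) {a b : II} (hab : a ≤ b) (ha : a ≤ E a) (hb : E b ≤ b) :
    ∃ y, E y = y := by
  classical
  set A : Set II := {t | a ≤ t ∧ t ≤ b ∧ t ≤ E t} with hA
  have haA : a ∈ A := ⟨le_rfl, hab, ha⟩
  have hbdd : BddAbove ((↑) '' A : Set ℝ) :=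
    ⟨(b:ℝ), by rintro r ⟨t, ht, rfl⟩; exact_mod_cast ht.2.1⟩
  have hne : ((↑) '' A : Set ℝ).Nonempty := ⟨a, a, haA, rfl⟩
  set y : ℝ := sSup ((↑) '' A) with hy
  have hay : (a:ℝ) ≤ y := le_csSup hbdd ⟨a, haA, rfl⟩
  have hyb : y ≤ (b:ℝ) := csSup_le hne (by rintro r ⟨t, ht, rfl⟩; exact_mod_cast ht.2.1)
  have hyI : y ∈ II := ⟨lt_of_lt_of_le a.2.1 hay, lt_of_le_of_lt hyb b.2.2⟩
  set Y : II := ⟨y, hyI⟩ with hYdef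
  have hYub : ∀ t ∈ A, t ≤ Y := by
    intro t ht
    have : (t:ℝ) ≤ y := le_csSup hbdd ⟨t, ht, rfl⟩
    exact Subtype.coe_le_coe.mp this
  have hYlub : IsLUB A Y := by
    refine ⟨hYub, fun w hw => ?_⟩
    have : y ≤ (w:ℝ) := csSup_le hne (by rintro r ⟨t, ht, rfl⟩; exact_mod_cast hw ht)
    exact Subtype.coe_le_coe.mp this
  rcases lt_trichotomy (E Y) Y with h | h | h
  · obtain ⟨t, htA, hlt⟩ : ∃ t ∈ A, E Y < t := by
      by_contra hcon
      push_neg at hcon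
      exact absurd (hYlub.2 (fun t ht => hcon t ht)) (not_le.mpr h)
    have h1 : E Y < E t := lt_of_lt_of_le hlt htA.2.2
    have h2 : Y < t := E.lt_iff_lt.mp h1
    exact absurd (hYub t htA) (not_le.mpr h2)
  · exact ⟨Y, h⟩
  · have hYb : Y < b := by
      rcases eq_or_lt_of_le (Subtype.coe_le_coe.mp hyb : Y ≤ b) with he | hlt
      · exfalso; rw [← he] at hb; exact absurd (lt_of_lt_of_le h hb) (lt_irrefl Y)
      · exact hlt
    set t : II := min b (E Y) with htdef
    have hYt : Y < t := lt_min hYb h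
    have htA : t ∈ A := by
      refine ⟨le_trans (Subtype.coe_le_coe.mp hay) (le_of_lt hYt), min_le_left _ _, ?_⟩
      calc t ≤ E Y := min_le_right _ _
        _ ≤ E t := E.le_iff_le.mpr (le_of_lt hYt)
    exact absurd (hYub t htA) (not_le.mpr hYt)

namespace Setup

variable (S : Setup G)

lemma pos_of_pos_at (u : G) (x : II) (hx : x < S.φ u x) : ∀ y : II, y < S.φ u y := by
  intro y
  rcases lt_trichotomy y (S.φ u y) with h | h | h
  · exact h
  · exfalso
    have hu : u = 1 := by
      by_contra h1; exact S.hfree u h1 y h.symm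
    rw [hu, S.act_one] at hx; exact lt_irrefl _ hx
  · exfalso
    have hfix : ∃ z, S.eio u z = z := by
      rcases le_total x y with hxy | hyx
      · exact fix_of_updown (S.eio u) hxy (le_of_lt hx) (le_of_lt h)
      · have h1 : (S.eio u).symm x ≤ x := (S.eio u).symm_apply_le.mpr (le_of_lt hx)
        have h2 : y ≤ (S.eio u).symm y := (S.eio u).le_symm_apply.mpr (le_of_lt h)
        obtain ⟨z, hz⟩ := fix_of_updown (S.eio u).symm hyx h2 h1
        exact ⟨z, by conv_lhs => rw [← hz, OrderIso.apply_symm_apply]⟩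
    obtain ⟨z, hz⟩ := hfix
    have hu : u = 1 := by
      by_contra h1; exact S.hfree u h1 z hz
    rw [hu, S.act_one] at hx; exact lt_irrefl _ hx

lemma trich (u : G) : u = 1 ∨ (∀ y, y < S.φ u y) ∨ (∀ y, S.φ u y < y) := by
  rcases lt_trichotomy pt (S.φ u pt) with h | h | h
  · exact Or.inr (Or.inl (S.pos_of_pos_at u pt h))
  · left
    by_contra h1; exact S.hfree u h1 pt h.symm
  · right; right
    have hpos : ∀ y, y < S.φ u⁻¹ y := by
      refine S.pos_of_pos_at u⁻¹ (S.φ u pt) ?_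
      rw [S.act_inv]; exact h
    intro y
    have := hpos (S.φ u y)
    rwa [S.act_inv] at this

lemma neg_inv_pos {u : G} (h : ∀ y, S.φ u y < y) : ∀ y, y < S.φ u⁻¹ y := by
  intro y
  have := h (S.φ u⁻¹ y)
  rwa [S.act_inv'] at this

lemma val_one : S.val 1 = (pt : ℝ) := by rw [val, S.act_one]

lemma eq_of_val_eq {g h : G} (hv : S.val g = S.val h) : g = h := by
  have hx : S.φ (h⁻¹ * g) pt = pt := by
    have h2 : S.φ g pt = S.φ h pt := Subtype.ext hv
    rw [S.act_mul, h2, S.act_inv]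
  by_contra hne
  have h3 : h⁻¹ * g ≠ 1 := by
    intro h1; rw [inv_mul_eq_one] at h1; exact hne h1.symm
  exact S.hfree _ h3 pt hx

lemma ptwise (g h : G) :
    g = h ∨ (∀ x, (S.φ g x : ℝ) < S.φ h x) ∨ (∀ x, (S.φ h x : ℝ) < S.φ g x) := by
  have key : ∀ a c : G, (∀ y, y < S.φ (c * a⁻¹) y) → ∀ x, (S.φ a x : ℝ) < S.φ c x := by
    intro a c hp x
    have := hp (S.φ a x)
    rw [S.act_mul] at this
    rw [S.act_inv] at this
    exact_mod_cast this
  rcases S.trich (h * g⁻¹) with h1 | h1 | h1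
  · left
    rw [mul_inv_eq_one] at h1; exact h1.symm
  · exact Or.inr (Or.inl (key g h h1))
  · refine Or.inr (Or.inr (key h g ?_))
    have : (h * g⁻¹)⁻¹ = g * h⁻¹ := by group
    rw [← this]
    exact S.neg_inv_pos h1

lemma le_ext {g h : G} (hv : S.val g ≤ S.val h) : ∀ x, (S.φ g x : ℝ) ≤ S.φ h x := by
  rcases S.ptwise g h with h1 | h1 | h1
  · intro x; rw [h1]
  · intro x; exact le_of_lt (h1 x)
  · exfalso; exact absurd hv (not_le.mpr (h1 pt))

lemma lt_ext {g h : G} (hv : S.val g < S.val h) : ∀ x, (S.φ g x : ℝ) < S.φ h x := by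
  rcases S.ptwise g h with h1 | h1 | h1
  · exfalso; rw [h1] at hv; exact lt_irrefl _ hv
  · exact h1
  · exfalso; exact absurd (le_of_lt hv) (not_le.mpr (h1 pt))

lemma le_mul_left (a : G) {g h : G} (hv : S.val g ≤ S.val h) : S.val (a*g) ≤ S.val (a*h) := by
  rw [val, val, S.act_mul, S.act_mul]
  exact_mod_cast (S.hm a).monotone (Subtype.coe_le_coe.mp hv)

lemma lt_mul_left (a : G) {g h : G} (hv : S.val g < S.val h) : S.val (a*g) < S.val (a*h) := by
  rw [val, val, S.act_mul, S.act_mul]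
  exact_mod_cast (S.hm a) (Subtype.coe_lt_coe.mp hv)

lemma le_mul_right (b : G) {g h : G} (hv : S.val g ≤ S.val h) : S.val (g*b) ≤ S.val (h*b) := by
  rw [val, val, S.act_mul, S.act_mul]
  exact S.le_ext hv _

lemma lt_mul_right (b : G) {g h : G} (hv : S.val g < S.val h) : S.val (g*b) < S.val (h*b) := by
  rw [val, val, S.act_mul, S.act_mul]
  exact S.lt_ext hv _

end Setup
end HolderPf
namespace HolderPf
namespace Setup

variable {G : Type} [Group G] (S : Setup G)

lemma reach {u : G} (hu : ∀ y, y < S.φ u y) (c : II) : ∃ n : ℕ, (c:ℝ) < S.val (u ^ n) := by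
  by_contra hcon
  push_neg at hcon
  set x : ℕ → II := fun n => S.φ (u ^ n) pt with hx
  have hmono : ∀ n, x n < x (n+1) := by
    intro n
    have h1 : u ^ (n+1) = u * u ^ n := by rw [pow_succ']
    rw [hx]; simp only
    rw [h1, S.act_mul]
    exact hu _
  have hbdd : BddAbove ((↑) '' (Set.range x) : Set ℝ) := by
    refine ⟨(c:ℝ), ?_⟩
    rintro r ⟨t, ⟨n, rfl⟩, rfl⟩
    exact hcon n
  have hne : ((↑) '' (Set.range x) : Set ℝ).Nonempty := ⟨x 0, x 0, ⟨0, rfl⟩, rfl⟩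
  set y : ℝ := sSup ((↑) '' (Set.range x)) with hy
  have h0y : (x 0 : ℝ) ≤ y := le_csSup hbdd ⟨x 0, ⟨0, rfl⟩, rfl⟩
  have hyc : y ≤ (c:ℝ) := csSup_le hne (by rintro r ⟨t, ⟨n, rfl⟩, rfl⟩; exact hcon n)
  have hyI : y ∈ II := ⟨lt_of_lt_of_le (x 0).2.1 h0y, lt_of_le_of_lt hyc c.2.2⟩
  set Y : II := ⟨y, hyI⟩ with hY
  have hlub : IsLUB (Set.range x) Y := by
    constructor
    · rintro t ⟨n, rfl⟩
      exact Subtype.coe_le_coe.mp (le_csSup hbdd ⟨x n, ⟨n, rfl⟩, rfl⟩)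
    · intro w hw
      refine Subtype.coe_le_coe.mp (csSup_le hne ?_)
      rintro r ⟨t, ⟨n, rfl⟩, rfl⟩
      exact_mod_cast hw ⟨n, rfl⟩
  have hlub2 : IsLUB (S.eio u '' Set.range x) (S.eio u Y) := (S.eio u).isLUB_image'.mpr hlub
  have himg : S.eio u '' Set.range x = Set.range (fun n => x (n+1)) := by
    ext t
    constructor
    · rintro ⟨s, ⟨n, rfl⟩, rfl⟩
      refine ⟨n, ?_⟩
      rw [S.eio_apply, hx]; simp only
      rw [show u ^ (n+1) = u * u ^ n by rw [pow_succ'], S.act_mul]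
    · rintro ⟨n, rfl⟩
      refine ⟨x n, ⟨n, rfl⟩, ?_⟩
      rw [S.eio_apply, hx]; simp only
      rw [show u ^ (n+1) = u * u ^ n by rw [pow_succ'], S.act_mul]
  rw [himg] at hlub2
  have hlub3 : IsLUB (Set.range (fun n => x (n+1))) Y := by
    constructor
    · rintro t ⟨n, rfl⟩
      exact hlub.1 ⟨n+1, rfl⟩
    · intro w hw
      refine hlub.2 ?_
      rintro t ⟨n, rfl⟩
      exact le_trans (le_of_lt (hmono n)) (hw ⟨n, rfl⟩)
  have hfix : S.eio u Y = Y := hlub2.unique hlub3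
  exact absurd hfix (ne_of_gt (hu Y))

lemma reach_down {u : G} (hu : ∀ y, y < S.φ u y) (c : II) : ∃ n : ℕ, S.val (u⁻¹ ^ n) < (c:ℝ) := by
  by_contra hcon
  push_neg at hcon
  have huneg : ∀ y, S.φ u⁻¹ y < y := by
    intro y
    have := hu (S.φ u⁻¹ y)
    rwa [S.act_inv'] at this
  set x : ℕ → II := fun n => S.φ (u⁻¹ ^ n) pt with hx
  have hmono : ∀ n, x (n+1) < x n := by
    intro n
    have h1 : u⁻¹ ^ (n+1) = u⁻¹ * u⁻¹ ^ n := by rw [pow_succ']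
    rw [hx]; simp only
    rw [h1, S.act_mul]
    exact huneg _
  have hbdd : BddBelow ((↑) '' (Set.range x) : Set ℝ) := by
    refine ⟨(c:ℝ), ?_⟩
    rintro r ⟨t, ⟨n, rfl⟩, rfl⟩
    exact hcon n
  have hne : ((↑) '' (Set.range x) : Set ℝ).Nonempty := ⟨x 0, x 0, ⟨0, rfl⟩, rfl⟩
  set y : ℝ := sInf ((↑) '' (Set.range x)) with hy
  have h0y : y ≤ (x 0 : ℝ) := csInf_le hbdd ⟨x 0, ⟨0, rfl⟩, rfl⟩
  have hyc : (c:ℝ) ≤ y := le_csInf hne (by rintro r ⟨t, ⟨n, rfl⟩, rfl⟩; exact hcon n)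
  have hyI : y ∈ II := ⟨lt_of_lt_of_le c.2.1 hyc, lt_of_le_of_lt h0y (x 0).2.2⟩
  set Y : II := ⟨y, hyI⟩ with hY
  have hlub : IsGLB (Set.range x) Y := by
    constructor
    · rintro t ⟨n, rfl⟩
      exact Subtype.coe_le_coe.mp (csInf_le hbdd ⟨x n, ⟨n, rfl⟩, rfl⟩)
    · intro w hw
      refine Subtype.coe_le_coe.mp (le_csInf hne ?_)
      rintro r ⟨t, ⟨n, rfl⟩, rfl⟩
      exact_mod_cast hw ⟨n, rfl⟩
  have hlub2 : IsGLB (S.eio u⁻¹ '' Set.range x) (S.eio u⁻¹ Y) := (S.eio u⁻¹).isGLB_image'.mpr hlub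
  have himg : S.eio u⁻¹ '' Set.range x = Set.range (fun n => x (n+1)) := by
    ext t
    constructor
    · rintro ⟨s, ⟨n, rfl⟩, rfl⟩
      refine ⟨n, ?_⟩
      rw [S.eio_apply, hx]; simp only
      rw [show u⁻¹ ^ (n+1) = u⁻¹ * u⁻¹ ^ n by rw [pow_succ'], S.act_mul]
    · rintro ⟨n, rfl⟩
      refine ⟨x n, ⟨n, rfl⟩, ?_⟩
      rw [S.eio_apply, hx]; simp only
      rw [show u⁻¹ ^ (n+1) = u⁻¹ * u⁻¹ ^ n by rw [pow_succ'], S.act_mul]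
  rw [himg] at hlub2
  have hlub3 : IsGLB (Set.range (fun n => x (n+1))) Y := by
    constructor
    · rintro t ⟨n, rfl⟩
      exact hlub.1 ⟨n+1, rfl⟩
    · intro w hw
      refine hlub.2 ?_
      rintro t ⟨n, rfl⟩
      exact le_trans (hw ⟨n, rfl⟩) (le_of_lt (hmono n))
  have hfix : S.eio u⁻¹ Y = Y := hlub2.unique hlub3
  have := huneg Y
  rw [show S.φ u⁻¹ Y = S.eio u⁻¹ Y from rfl, hfix] at this
  exact absurd this (lt_irrefl Y)

variable (b : G) (hb : ∀ y : II, y < S.φ b y)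
include hb

lemma val_zpow_strictMono : StrictMono (fun k : ℤ => S.val (b ^ k)) := by
  apply strictMono_int_of_lt_succ
  intro n
  have h1 : b ^ (n+1) = b * b ^ n := by
    rw [show (n+1 : ℤ) = 1 + n by ring, zpow_one_add]
  simp only [val]
  rw [h1, S.act_mul]
  exact_mod_cast hb _

lemma exK (g : G) :
    ∃ k : ℤ, S.val (b ^ k) ≤ S.val g ∧ ∀ j : ℤ, S.val (b ^ j) ≤ S.val g → j ≤ k := by
  have hne : ∃ k : ℤ, S.val (b ^ k) ≤ S.val g := by
    obtain ⟨n, hn⟩ := S.reach_down hb (S.φ g pt)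
    refine ⟨-(n:ℤ), ?_⟩
    rw [zpow_neg, zpow_natCast, ← inv_pow]
    exact le_of_lt hn
  have hbdd : ∃ B : ℤ, ∀ j : ℤ, S.val (b ^ j) ≤ S.val g → j ≤ B := by
    obtain ⟨n, hn⟩ := S.reach hb (S.φ g pt)
    refine ⟨(n:ℤ), ?_⟩
    intro j hj
    by_contra hc
    push_neg at hc
    have : S.val (b ^ (n:ℤ)) ≤ S.val (b ^ j) := (S.val_zpow_strictMono b hb).monotone (le_of_lt hc)
    rw [zpow_natCast] at this
    exact absurd (lt_of_lt_of_le hn (le_trans this hj)) (lt_irrefl _)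
  obtain ⟨k, h1, h2⟩ := Int.exists_greatest_of_bdd hbdd hne
  exact ⟨k, h1, h2⟩

noncomputable def K (g : G) : ℤ := (S.exK b hb g).choose

lemma K_le (g : G) : S.val (b ^ S.K b hb g) ≤ S.val g := (S.exK b hb g).choose_spec.1

lemma K_max {g : G} {j : ℤ} (h : S.val (b ^ j) ≤ S.val g) : j ≤ S.K b hb g :=
  (S.exK b hb g).choose_spec.2 j h

lemma K_lt (g : G) : S.val g < S.val (b ^ (S.K b hb g + 1)) := by
  by_contra hc
  push_neg at hc
  have := S.K_max b hb hc
  omega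

lemma K_eq {g : G} {k : ℤ} (h1 : S.val (b ^ k) ≤ S.val g) (h2 : S.val g < S.val (b ^ (k+1))) :
    S.K b hb g = k := by
  have ha := S.K_max b hb h1
  have hc : S.K b hb g ≤ k := by
    by_contra hc
    push_neg at hc
    have : S.val (b ^ (k+1)) ≤ S.val (b ^ (S.K b hb g)) :=
      (S.val_zpow_strictMono b hb).monotone (by omega)
    exact absurd (lt_of_lt_of_le h2 (le_trans this (S.K_le b hb g))) (lt_irrefl _)
  omega

lemma K_zpow (k : ℤ) : S.K b hb (b ^ k) = k :=
  S.K_eq b hb le_rfl (S.val_zpow_strictMono b hb (lt_add_one k))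

lemma K_one : S.K b hb 1 = 0 := by
  have := S.K_zpow b hb 0
  rwa [zpow_zero] at this

lemma K_mono {g h : G} (hv : S.val g ≤ S.val h) : S.K b hb g ≤ S.K b hb h :=
  S.K_max b hb (le_trans (S.K_le b hb g) hv)

lemma K_superadd (g h : G) : S.K b hb g + S.K b hb h ≤ S.K b hb (g * h) := by
  apply S.K_max b hb
  rw [zpow_add]
  calc S.val (b ^ S.K b hb g * b ^ S.K b hb h)
      ≤ S.val (g * b ^ S.K b hb h) := S.le_mul_right _ (S.K_le b hb g)
    _ ≤ S.val (g * h) := S.le_mul_left _ (S.K_le b hb h)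

lemma K_subadd (g h : G) : S.K b hb (g * h) ≤ S.K b hb g + S.K b hb h + 1 := by
  have hlt : S.val (g * h) < S.val (b ^ (S.K b hb g + S.K b hb h + 2)) := by
    have e : (S.K b hb g + S.K b hb h + 2) = (S.K b hb g + 1) + (S.K b hb h + 1) := by ring
    rw [e, zpow_add]
    calc S.val (g * h) < S.val (b ^ (S.K b hb g + 1) * h) := S.lt_mul_right _ (S.K_lt b hb g)
      _ < S.val (b ^ (S.K b hb g + 1) * b ^ (S.K b hb h + 1)) :=
          S.lt_mul_left _ (S.K_lt b hb h)
  by_contra hc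
  push_neg at hc
  have : S.val (b ^ (S.K b hb g + S.K b hb h + 2)) ≤ S.val (b ^ (S.K b hb (g*h))) :=
    (S.val_zpow_strictMono b hb).monotone (by omega)
  exact absurd (lt_of_lt_of_le hlt (le_trans this (S.K_le b hb _))) (lt_irrefl _)

lemma K_inv_lower (g : G) : -1 ≤ S.K b hb g + S.K b hb g⁻¹ := by
  have h1 := S.K_subadd b hb g g⁻¹
  rw [mul_inv_cancel, S.K_one b hb] at h1
  omega

lemma K_inv_upper (g : G) : S.K b hb g + S.K b hb g⁻¹ ≤ 0 := by
  have h1 := S.K_superadd b hb g g⁻¹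
  rw [mul_inv_cancel, S.K_one b hb] at h1
  omega

lemma K_conj (x y : G) : S.K b hb y - 1 ≤ S.K b hb (x⁻¹ * y * x) := by
  have h1 := S.K_superadd b hb (x⁻¹ * y) x
  have h2 := S.K_superadd b hb x⁻¹ y
  have h3 := S.K_inv_lower b hb x
  have h4 := S.K_inv_upper b hb x
  omega

lemma K_pow_le (g : G) (n : ℕ) : S.K b hb (g ^ n) ≤ n * (S.K b hb g + 1) := by
  induction n with
  | zero => simp [S.K_one b hb]
  | succ n ih =>
    have h1 : g ^ (n+1) = g ^ n * g := pow_succ g n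
    rw [h1]
    have h2 := S.K_subadd b hb (g ^ n) g
    push_cast
    push_cast at ih
    linarith

lemma K_prod_pow (x y : G) (n : ℕ) :
    S.K b hb (x ^ n) + n * (S.K b hb y - 1) ≤ S.K b hb ((x * y) ^ n) := by
  have hc : ∀ m : ℕ, (m : ℤ) * (S.K b hb y - 1) ≤ S.K b hb ((x ^ m)⁻¹ * (x * y) ^ m) := by
    intro m
    induction m with
    | zero => simp [S.K_one b hb]
    | succ m ih =>
      have hgrp : (x ^ (m+1))⁻¹ * (x * y) ^ (m+1)
          = (x⁻¹ * ((x ^ m)⁻¹ * (x * y) ^ m) * x) * y := by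
        rw [pow_succ x m, pow_succ (x*y) m]
        group
      rw [hgrp]
      have h1 := S.K_superadd b hb (x⁻¹ * ((x ^ m)⁻¹ * (x * y) ^ m) * x) y
      have h2 := S.K_conj b hb x ((x ^ m)⁻¹ * (x * y) ^ m)
      push_cast
      push_cast at ih
      linarith
  have hsplit : (x * y) ^ n = x ^ n * ((x ^ n)⁻¹ * (x * y) ^ n) := by group
  calc S.K b hb (x ^ n) + (n:ℤ) * (S.K b hb y - 1)
      ≤ S.K b hb (x ^ n) + S.K b hb ((x ^ n)⁻¹ * (x * y) ^ n) := by
        have := hc n; omega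
    _ ≤ S.K b hb (x ^ n * ((x ^ n)⁻¹ * (x * y) ^ n)) := S.K_superadd b hb _ _
    _ = S.K b hb ((x * y) ^ n) := by rw [← hsplit]

end Setup
end HolderPf
namespace HolderPf
namespace Setup

variable {G : Type} [Group G] (S : Setup G)

lemma pos_iff (u : G) : ((pt:ℝ) < S.val u) ↔ (∀ y, y < S.φ u y) := by
  constructor
  · intro h
    exact S.pos_of_pos_at u pt (Subtype.coe_lt_coe.mp h)
  · intro h
    exact_mod_cast h pt

variable (b : G) (hb : ∀ y : II, y < S.φ b y)
include hb

lemma exT (g : G) :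
    ∃ L : ℝ, Tendsto (fun n : ℕ => (S.K b hb (g^n) : ℝ) / n) atTop (𝓝 L) := by
  have hsub : Subadditive (fun n : ℕ => (-(S.K b hb (g^n)) : ℝ)) := by
    intro m n
    have h := S.K_superadd b hb (g^m) (g^n)
    rw [← pow_add] at h
    have h' : (S.K b hb (g^m) : ℝ) + (S.K b hb (g^n) : ℝ) ≤ (S.K b hb (g^(m+n)) : ℝ) := by
      exact_mod_cast h
    push_cast
    linarith
  have hbdd : BddBelow (Set.range fun n : ℕ => (-(S.K b hb (g^n)) : ℝ) / n) := by
    refine ⟨min 0 (-(S.K b hb g : ℝ) - 1), ?_⟩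
    rintro r ⟨n, rfl⟩
    rcases Nat.eq_zero_or_pos n with h0 | hpos
    · subst h0
      simp [pow_zero, S.K_one b hb]
    · have h1 := S.K_pow_le b hb g n
      have h2 : ((S.K b hb (g^n)) : ℝ) ≤ (n : ℝ) * ((S.K b hb g : ℝ) + 1) := by
        exact_mod_cast h1
      have hn : (0:ℝ) < n := by exact_mod_cast hpos
      have h3 : (-(S.K b hb g : ℝ) - 1) ≤ (-(S.K b hb (g^n)) : ℝ) / n := by
        rw [le_div_iff₀ hn]
        nlinarith
      exact le_trans (min_le_right _ _) h3
  refine ⟨-hsub.lim, ?_⟩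
  have h2 := (hsub.tendsto_lim hbdd).neg
  exact h2.congr (fun n => by ring)

noncomputable def T (g : G) : ℝ := (S.exT b hb g).choose

lemma T_tendsto (g : G) :
    Tendsto (fun n : ℕ => (S.K b hb (g^n) : ℝ) / n) atTop (𝓝 (S.T b hb g)) :=
  (S.exT b hb g).choose_spec

lemma T_unique {g : G} {L : ℝ}
    (h : Tendsto (fun n : ℕ => (S.K b hb (g^n) : ℝ) / n) atTop (𝓝 L)) : S.T b hb g = L :=
  tendsto_nhds_unique (S.T_tendsto b hb g) h

lemma T_one : S.T b hb 1 = 0 := by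
  apply S.T_unique b hb
  have : (fun n : ℕ => (S.K b hb ((1:G)^n) : ℝ) / n) = fun _ => 0 := by
    funext n
    rw [one_pow, S.K_one b hb]
    simp
  rw [this]
  exact tendsto_const_nhds

lemma T_pow (g : G) (m : ℕ) : S.T b hb (g ^ m) = m * S.T b hb g := by
  rcases Nat.eq_zero_or_pos m with h0 | hpos
  · subst h0; rw [pow_zero, S.T_one b hb]; simp
  · apply S.T_unique b hb
    have hmul : Tendsto (fun n : ℕ => m * n) atTop atTop :=
      (strictMono_mul_left_of_pos hpos).tendsto_atTop
    have hcomp : Tendsto (fun n : ℕ => (S.K b hb (g^(m*n)) : ℝ) / (↑(m*n))) atTop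
        (𝓝 (S.T b hb g)) := (S.T_tendsto b hb g).comp hmul
    have h2 := hcomp.const_mul (m : ℝ)
    refine h2.congr' ?_
    filter_upwards [eventually_ge_atTop 1] with n hn
    have hm : (m:ℝ) ≠ 0 := Nat.cast_ne_zero.mpr hpos.ne'
    have hn' : (n:ℝ) ≠ 0 := by
      have : 0 < n := hn
      exact_mod_cast this.ne'
    rw [pow_mul]
    push_cast
    field_simp

lemma T_inv (g : G) : S.T b hb g⁻¹ = - S.T b hb g := by
  apply S.T_unique b hb
  have hsum : Tendsto (fun n : ℕ =>
      (S.K b hb (g⁻¹^n) : ℝ) / n + (S.K b hb (g^n) : ℝ) / n) atTop (𝓝 0) := by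
    apply squeeze_zero_norm' (a := fun n : ℕ => 1 / (n:ℝ))
    · filter_upwards [eventually_ge_atTop 1] with n hn
      have hn' : (0:ℝ) < n := by exact_mod_cast hn
      have h1 := S.K_inv_lower b hb (g^n)
      have h2 := S.K_inv_upper b hb (g^n)
      rw [inv_pow]
      rw [← add_div, Real.norm_eq_abs, abs_div, abs_of_pos hn']
      have h3 : (-1:ℤ) ≤ S.K b hb ((g^n)⁻¹) + S.K b hb (g^n) := by omega
      have h4 : S.K b hb ((g^n)⁻¹) + S.K b hb (g^n) ≤ 0 := by omega
      have hab : |(S.K b hb ((g^n)⁻¹) : ℝ) + (S.K b hb (g^n) : ℝ)| ≤ 1 := by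
        rw [abs_le]
        constructor
        · exact_mod_cast h3
        · have h5 : ((S.K b hb ((g^n)⁻¹) : ℝ) + (S.K b hb (g^n) : ℝ)) ≤ 0 := by
            exact_mod_cast h4
          linarith
      gcongr
    · exact tendsto_one_div_atTop_nhds_zero_nat
  have h3 := hsum.sub (S.T_tendsto b hb g)
  rw [zero_sub] at h3
  exact h3.congr (fun n => by ring)

end Setup
end HolderPf
namespace HolderPf
namespace Setup

variable {G : Type} [Group G] (S : Setup G)
variable (b : G) (hb : ∀ y : II, y < S.φ b y)
include hb

omit hb in
lemma val_pow_le_val_pow {g h : G} (hv : S.val g ≤ S.val h) (n : ℕ) :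
    S.val (g ^ n) ≤ S.val (h ^ n) := by
  induction n with
  | zero => simp
  | succ n ih =>
    rw [pow_succ, pow_succ]
    calc S.val (g ^ n * g) ≤ S.val (g ^ n * h) := S.le_mul_left _ hv
      _ ≤ S.val (h ^ n * h) := S.le_mul_right _ ih

lemma T_mono {g h : G} (hv : S.val g ≤ S.val h) : S.T b hb g ≤ S.T b hb h := by
  refine le_of_tendsto_of_tendsto' (S.T_tendsto b hb g) (S.T_tendsto b hb h) (fun n => ?_)
  rcases Nat.eq_zero_or_pos n with h0 | hpos
  · subst h0; simp
  · have hn : (0:ℝ) < n := by exact_mod_cast hpos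
    have := S.K_mono b hb (S.val_pow_le_val_pow hv n)
    have h2 : (S.K b hb (g^n) : ℝ) ≤ (S.K b hb (h^n) : ℝ) := by exact_mod_cast this
    gcongr

lemma T_self : S.T b hb b = 1 := by
  apply S.T_unique b hb
  have : ∀ᶠ n : ℕ in atTop, (S.K b hb (b^n) : ℝ) / n = 1 := by
    filter_upwards [eventually_ge_atTop 1] with n hn
    have hn' : (n:ℝ) ≠ 0 := by
      have : (0:ℕ) < n := hn
      exact_mod_cast this.ne'
    have h1 : S.K b hb (b ^ n) = n := by
      have := S.K_zpow b hb (n : ℤ)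
      rwa [zpow_natCast] at this
    rw [h1]
    push_cast
    field_simp
  exact Tendsto.congr' (this.mono fun n h => h.symm) tendsto_const_nhds

lemma T_posit {g : G} (hg : ∀ y, y < S.φ g y) : 0 < S.T b hb g := by
  obtain ⟨n, hn⟩ := S.reach hg (S.φ b pt)
  have hvb : S.val b = ((S.φ b pt : II) : ℝ) := rfl
  have hlt : S.val b < S.val (g ^ n) := hn
  have hn0 : 0 < n := by
    rcases Nat.eq_zero_or_pos n with h0 | h
    · exfalso
      subst h0
      rw [pow_zero, S.val_one] at hlt
      have := hb pt
      have h2 : (pt:ℝ) < S.val b := by exact_mod_cast this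
      linarith
    · exact h
  have h1 : S.T b hb b ≤ S.T b hb (g ^ n) := S.T_mono b hb (le_of_lt hlt)
  rw [S.T_self b hb, S.T_pow b hb] at h1
  have hnr : (0:ℝ) < n := by exact_mod_cast hn0
  nlinarith

lemma T_key (x y : G) : S.T b hb x + (S.K b hb y : ℝ) - 1 ≤ S.T b hb (x * y) := by
  have hL : Tendsto (fun n : ℕ =>
      ((S.K b hb (x^n) : ℝ) + (n:ℝ) * ((S.K b hb y : ℝ) - 1)) / n) atTop
      (𝓝 (S.T b hb x + ((S.K b hb y : ℝ) - 1))) := by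
    have h1 : Tendsto (fun n : ℕ => (S.K b hb (x^n) : ℝ)/n + ((S.K b hb y : ℝ) - 1)) atTop
        (𝓝 (S.T b hb x + ((S.K b hb y : ℝ) - 1))) :=
      (S.T_tendsto b hb x).add tendsto_const_nhds
    refine h1.congr' ?_
    filter_upwards [eventually_ge_atTop 1] with n hn
    have hn' : (n:ℝ) ≠ 0 := by
      have : (0:ℝ) < n := by exact_mod_cast hn
      linarith
    field_simp
  have hle : ∀ n : ℕ,
      ((S.K b hb (x^n) : ℝ) + (n:ℝ) * ((S.K b hb y : ℝ) - 1)) / n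
        ≤ (S.K b hb ((x*y)^n) : ℝ) / n := by
    intro n
    rcases Nat.eq_zero_or_pos n with h0 | hpos
    · subst h0; simp [S.K_one b hb]
    · have hn : (0:ℝ) < n := by exact_mod_cast hpos
      have h2 := S.K_prod_pow b hb x y n
      have h3 : ((S.K b hb (x^n) : ℝ) + (n:ℝ) * ((S.K b hb y : ℝ) - 1))
          ≤ (S.K b hb ((x*y)^n) : ℝ) := by exact_mod_cast h2
      gcongr
  have := le_of_tendsto_of_tendsto' hL (S.T_tendsto b hb (x*y)) hle
  linarith

lemma T_le_K (y : G) : S.T b hb y ≤ (S.K b hb y : ℝ) + 1 := by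
  refine le_of_tendsto (S.T_tendsto b hb y) ?_
  filter_upwards [eventually_ge_atTop 1] with n hn
  have hn' : (0:ℝ) < n := by exact_mod_cast hn
  have h1 := S.K_pow_le b hb y n
  have h2 : (S.K b hb (y^n) : ℝ) ≤ (n:ℝ) * ((S.K b hb y : ℝ) + 1) := by exact_mod_cast h1
  rw [div_le_iff₀ hn']
  linarith

lemma T_superadd2 (x y : G) : S.T b hb x + S.T b hb y - 2 ≤ S.T b hb (x * y) := by
  have h1 := S.T_key b hb x y
  have h2 := S.T_le_K b hb y
  linarith

lemma T_defect (x y : G) : |S.T b hb (x * y) - S.T b hb x - S.T b hb y| ≤ 2 := by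
  have h1 := S.T_superadd2 b hb x y
  have h2 := S.T_superadd2 b hb y⁻¹ x⁻¹
  rw [S.T_inv b hb, S.T_inv b hb] at h2
  have h3 : (x * y)⁻¹ = y⁻¹ * x⁻¹ := mul_inv_rev x y
  have h4 : S.T b hb ((x*y)⁻¹) = - S.T b hb (x*y) := S.T_inv b hb (x*y)
  rw [h3] at h4
  rw [abs_le]
  constructor <;> linarith

lemma T_zpow (g : G) (k : ℤ) : S.T b hb (g ^ k) = (k : ℝ) * S.T b hb g := by
  obtain ⟨n, rfl | rfl⟩ := k.eq_nat_or_neg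
  · rw [zpow_natCast, S.T_pow b hb]
    push_cast; ring
  · rw [zpow_neg, zpow_natCast, S.T_inv b hb, S.T_pow b hb]
    push_cast; ring

end Setup
end HolderPf
namespace HolderPf
namespace Setup

variable {G : Type} [Group G] (S : Setup G)
variable (b : G) (hb : ∀ y : II, y < S.φ b y)
include hb

lemma T_rescale (m : G) (hm' : ∀ y, y < S.φ m y) (g : G) :
    S.T b hb g = S.T b hb m * S.T m hm' g := by
  have hTm : 0 < S.T b hb m := S.T_posit b hb hm'
  have key : ∀ n : ℕ, 1 ≤ n →
      |S.T b hb g - ((S.K m hm' (g^n) : ℝ)/n) * S.T b hb m| ≤ S.T b hb m / n := by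
    intro n hn
    have hn' : (0:ℝ) < n := by exact_mod_cast hn
    set k := S.K m hm' (g^n) with hk
    have h1 : S.val (m^k) ≤ S.val (g^n) := S.K_le m hm' _
    have h2 : S.val (g^n) < S.val (m^(k+1)) := S.K_lt m hm' _
    have e1 : S.T b hb (m^k) ≤ S.T b hb (g^n) := S.T_mono b hb h1
    have e2 : S.T b hb (g^n) ≤ S.T b hb (m^(k+1)) := S.T_mono b hb (le_of_lt h2)
    rw [S.T_zpow b hb m k] at e1
    rw [S.T_zpow b hb m (k+1)] at e2
    rw [S.T_pow b hb g n] at e1 e2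
    have e : S.T b hb g - ((k:ℝ)/n) * S.T b hb m
        = ((n:ℝ) * S.T b hb g - (k:ℝ) * S.T b hb m)/n := by
      field_simp
    rw [e, abs_div, abs_of_pos hn']
    have hnum : |(n:ℝ) * S.T b hb g - (k:ℝ) * S.T b hb m| ≤ S.T b hb m := by
      push_cast at e2
      rw [abs_le]
      constructor <;> linarith
    gcongr
  have h5 : Tendsto (fun n : ℕ => ((S.K m hm' (g^n):ℝ)/n) * S.T b hb m) atTop
      (𝓝 (S.T m hm' g * S.T b hb m)) := (S.T_tendsto m hm' g).mul_const _
  have h6 : Tendsto (fun n : ℕ => S.T b hb g - ((S.K m hm' (g^n):ℝ)/n) * S.T b hb m)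
      atTop (𝓝 0) := by
    apply squeeze_zero_norm' (a := fun n : ℕ => S.T b hb m / n)
    · filter_upwards [eventually_ge_atTop 1] with n hn
      exact key n hn
    · have h7 : Tendsto (fun n : ℕ => (n:ℝ)) atTop atTop := tendsto_natCast_atTop_atTop
      exact Tendsto.div_atTop tendsto_const_nhds h7
  have h8 := h6.add h5
  rw [zero_add] at h8
  have h9 : (fun n : ℕ => (S.T b hb g - ((S.K m hm' (g^n):ℝ)/n) * S.T b hb m)
      + ((S.K m hm' (g^n):ℝ)/n) * S.T b hb m) = fun _ => S.T b hb g := by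
    funext n; ring
  rw [h9] at h8
  rw [mul_comm]
  exact (tendsto_nhds_unique h8 tendsto_const_nhds).symm

omit hb in
lemma halve {h : G} (u : G) (hu1 : (pt:ℝ) < S.val u) (hu2 : S.val u < S.val h) :
    ∃ w : G, (pt:ℝ) < S.val w ∧ S.val (w * w) ≤ S.val h := by
  rcases le_or_gt (S.val (u*u)) (S.val h) with hc | hc
  · exact ⟨u, hu1, hc⟩
  · refine ⟨u⁻¹ * h, ?_, ?_⟩
    · have := S.lt_mul_left u⁻¹ hu2
      rwa [inv_mul_cancel, S.val_one] at this
    · have hwu : S.val (u⁻¹ * h) < S.val u := by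
        have := S.lt_mul_left u⁻¹ hc
        rwa [show u⁻¹ * (u * u) = u by group] at this
      have h1 : S.val ((u⁻¹ * h) * (u⁻¹ * h)) ≤ S.val (u * (u⁻¹ * h)) :=
        le_of_lt (S.lt_mul_right _ hwu)
      rwa [show u * (u⁻¹ * h) = h by group] at h1

omit hb in
lemma discrete_rep (h : G) (hh : ∀ y, y < S.φ h y)
    (hleast : ∀ u : G, (pt:ℝ) < S.val u → S.val h ≤ S.val u) (g : G) :
    g = h ^ (S.K h hh g) := by
  set k := S.K h hh g with hk
  have h1 : S.val (h^k) ≤ S.val g := S.K_le h hh _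
  have h2 : S.val g < S.val (h^(k+1)) := S.K_lt h hh _
  set w := (h^k)⁻¹ * g with hw
  have hw1 : (pt:ℝ) ≤ S.val w := by
    have := S.le_mul_left (h^k)⁻¹ h1
    rwa [inv_mul_cancel, S.val_one] at this
  have hw2 : S.val w < S.val h := by
    have := S.lt_mul_left (h^k)⁻¹ h2
    rwa [show (h^k)⁻¹ * h^(k+1) = h by rw [zpow_add_one]; group] at this
  have hwone : w = 1 := by
    rcases eq_or_lt_of_le hw1 with he | hlt
    · apply S.eq_of_val_eq
      rw [S.val_one, ← he]
    · exact absurd (hleast w hlt) (not_le.mpr hw2)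
  have : (h^k)⁻¹ * g = 1 := hwone
  rw [inv_mul_eq_one] at this
  exact this.symm

end Setup
end HolderPf
namespace HolderPf

variable {G : Type} [Group G]

theorem main (S : Setup G) :
    (∀ a c : G, a * c = c * a) ∧ ∃ ψ : G →* Multiplicative ℝ, Function.Injective ψ := by
  by_cases htriv : ∀ g : G, g = 1
  · constructor
    · intro a c; rw [htriv a, htriv c]
    · exact ⟨1, fun a c _ => by rw [htriv a, htriv c]⟩
  · push_neg at htriv
    obtain ⟨g0, hg0⟩ := htriv
    obtain ⟨f, hf⟩ : ∃ f : G, ∀ y, y < S.φ f y := by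
      rcases S.trich g0 with h | h | h
      · exact absurd h hg0
      · exact ⟨g0, h⟩
      · exact ⟨g0⁻¹, S.neg_inv_pos h⟩
    by_cases hdisc : ∃ h : G, ((pt:ℝ) < S.val h) ∧ ∀ u : G, (pt:ℝ) < S.val u → S.val h ≤ S.val u
    · obtain ⟨h, hh0, hleast⟩ := hdisc
      have hh : ∀ y, y < S.φ h y := (S.pos_iff h).mp hh0
      have hrep : ∀ g : G, g = h ^ (S.K h hh g) := S.discrete_rep h hh hleast
      have hKadd : ∀ a c : G, S.K h hh (a * c) = S.K h hh a + S.K h hh c := by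
        intro a c
        conv_lhs => rw [hrep a, hrep c, ← zpow_add]
        rw [S.K_zpow h hh]
      constructor
      · intro a c
        conv_lhs => rw [hrep a, hrep c, ← zpow_add, add_comm, zpow_add]
        conv_rhs => rw [hrep a, hrep c]
      · refine ⟨MonoidHom.mk' (fun g => Multiplicative.ofAdd ((S.K h hh g : ℝ))) ?_, ?_⟩
        · intro a c
          rw [hKadd]
          push_cast
          rw [ofAdd_add]
        · intro a c hac
          simp only [MonoidHom.mk'_apply] at hac
          have h1 : (S.K h hh a : ℝ) = (S.K h hh c : ℝ) := Multiplicative.ofAdd.injective hac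
          have hkk : S.K h hh a = S.K h hh c := by exact_mod_cast h1
          rw [hrep a, hrep c, hkk]
    · push_neg at hdisc
      have hsmall : ∀ k : ℕ, ∃ m : G, (∀ y, y < S.φ m y) ∧ S.T f hf m ≤ 1 / 2^k := by
        intro k
        induction k with
        | zero => exact ⟨f, hf, by rw [S.T_self f hf]; norm_num⟩
        | succ k ih =>
          obtain ⟨m, hm1, hm2⟩ := ih
          have hm0 : (pt:ℝ) < S.val m := (S.pos_iff m).mpr hm1
          obtain ⟨u, hu1, hu2⟩ := hdisc m hm0
          obtain ⟨w, hw1, hw2⟩ := S.halve u hu1 hu2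
          have hwpos : ∀ y, y < S.φ w y := (S.pos_iff w).mp hw1
          refine ⟨w, hwpos, ?_⟩
          have h2 : S.T f hf (w * w) ≤ S.T f hf m := S.T_mono f hf hw2
          have h3 : S.T f hf (w * w) = 2 * S.T f hf w := by
            rw [← pow_two, S.T_pow f hf]
            norm_num
          have h4 : (1:ℝ)/(2^(k+1)) = (1/2^k)/2 := by
            rw [pow_succ]
            ring
          rw [h4]
          linarith
      have hadd : ∀ x y : G, S.T f hf (x * y) = S.T f hf x + S.T f hf y := by
        intro x y
        have key : ∀ k : ℕ, |S.T f hf (x*y) - S.T f hf x - S.T f hf y| ≤ 2 * (1/2^k) := by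
          intro k
          obtain ⟨m, hm1, hm2⟩ := hsmall k
          have hdef : |S.T m hm1 (x*y) - S.T m hm1 x - S.T m hm1 y| ≤ 2 :=
            S.T_defect m hm1 x y
          have hmpos : 0 < S.T f hf m := S.T_posit f hf hm1
          have e : S.T f hf (x*y) - S.T f hf x - S.T f hf y
              = S.T f hf m * (S.T m hm1 (x*y) - S.T m hm1 x - S.T m hm1 y) := by
            rw [S.T_rescale f hf m hm1 (x*y), S.T_rescale f hf m hm1 x,
              S.T_rescale f hf m hm1 y]
            ring
          rw [e, abs_mul, abs_of_pos hmpos]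
          calc S.T f hf m * |S.T m hm1 (x*y) - S.T m hm1 x - S.T m hm1 y|
              ≤ S.T f hf m * 2 := by
                exact mul_le_mul_of_nonneg_left hdef (le_of_lt hmpos)
            _ ≤ 2 * (1/2^k) := by linarith
        have h0 : Tendsto (fun k : ℕ => 2 * ((1:ℝ)/2^k)) atTop (𝓝 0) := by
          have h1 := tendsto_pow_atTop_nhds_zero_of_lt_one
            (by norm_num : (0:ℝ) ≤ 1/2) (by norm_num : (1:ℝ)/2 < 1)
          have h2 := h1.const_mul (2:ℝ)
          rw [mul_zero] at h2
          refine h2.congr (fun k => ?_)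
          rw [div_pow]
          norm_num
        have habs : |S.T f hf (x*y) - S.T f hf x - S.T f hf y| ≤ 0 :=
          ge_of_tendsto' h0 key
        have h2 := abs_nonneg (S.T f hf (x*y) - S.T f hf x - S.T f hf y)
        have h3 : |S.T f hf (x*y) - S.T f hf x - S.T f hf y| = 0 := le_antisymm habs h2
        rw [abs_eq_zero] at h3
        linarith
      have hinj : ∀ a c : G, S.T f hf a = S.T f hf c → a = c := by
        intro a c hac
        by_contra hne
        have h1 : S.T f hf (a * c⁻¹) = 0 := by
          rw [hadd, S.T_inv f hf]
          linarith
        have h2 : a * c⁻¹ ≠ 1 := by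
          intro hq; rw [mul_inv_eq_one] at hq; exact hne hq
        rcases S.trich (a*c⁻¹) with hq | hq | hq
        · exact h2 hq
        · exact absurd h1.symm (ne_of_lt (S.T_posit f hf hq))
        · have h3 := S.T_posit f hf (S.neg_inv_pos hq)
          rw [S.T_inv f hf, h1] at h3
          norm_num at h3
      constructor
      · intro a c
        apply hinj
        rw [hadd, hadd, add_comm]
      · refine ⟨MonoidHom.mk' (fun g => Multiplicative.ofAdd (S.T f hf g))
          (fun a c => by rw [hadd, ofAdd_add]), ?_⟩
        intro a c hac
        simp only [MonoidHom.mk'_apply] at hac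
        exact hinj a c (Multiplicative.ofAdd.injective hac)

end HolderPf
namespace HolderPf

lemma free_noncomm :
    FreeGroup.of (0 : Fin 2) * FreeGroup.of 1 ≠ FreeGroup.of 1 * FreeGroup.of 0 := by
  intro hcomm
  have h := congrArg (FreeGroup.lift
    (fun i : Fin 2 => if i = 0 then Equiv.swap (0 : Fin 3) 1 else Equiv.swap (1 : Fin 3) 2)) hcomm
  simp only [map_mul, FreeGroup.lift_apply_of, if_pos rfl] at h
  norm_num at h
  have h2 := congrArg (fun e : Equiv.Perm (Fin 3) => e 0) h
  simp only [Equiv.Perm.mul_apply] at h2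
  revert h2
  decide

end HolderPf

/-- Hölder's theorem: a group acting freely on the open interval `(0,1)` by
orientation-preserving homeomorphisms is abelian (embeds in `(ℝ,+)`); consequently a free
group of rank 2 acting faithfully on `(0,1)` by orientation-preserving homeomorphisms
contains a nontrivial element with a fixed point. -/
theorem stmt10 :
    (∀ (G : Type) [Group G] (φ : G →* Equiv.Perm ↥(Set.Ioo (0 : ℝ) 1)),
      (∀ g : G, StrictMono (φ g)) →
      (∀ g : G, g ≠ 1 → ∀ x, φ g x ≠ x) →
      ((∀ a b : G, a * b = b * a) ∧
        ∃ ψ : G →* Multiplicative ℝ, Function.Injective ψ)) ∧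
    (∀ φ : FreeGroup (Fin 2) →* Equiv.Perm ↥(Set.Ioo (0 : ℝ) 1),
      (∀ g, StrictMono (φ g)) → Function.Injective φ →
      ∃ g : FreeGroup (Fin 2), g ≠ 1 ∧ ∃ x, φ g x = x) := by
  constructor
  · intro G _ φ hmono hfree
    exact HolderPf.main ⟨φ, hmono, hfree⟩
  · intro φ hmono _
    by_contra hcon
    push_neg at hcon
    have hfree : ∀ g : FreeGroup (Fin 2), g ≠ 1 → ∀ x, φ g x ≠ x := fun g hg x hx =>
      hcon g hg x hx
    have hcomm := (HolderPf.main ⟨φ, hmono, hfree⟩).1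
    exact HolderPf.free_noncomm (hcomm _ _)
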